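/- Let n ∈ ℕ and let λ ∈ ℂ, λ ≠ 0, satisfy (n² + iλ − λ²)J_n(λ) + λJ_n′(λ) = 0, where J_n is the Bessel function of the first kind of order n. Then the function u(r,θ) = J_n(λr)e^{inθ} on the closed unit disk is nonzero and satisfies −Δu = λ²u in the open unit disk and (−Δ_Γ + iλ)u + ∂_ν u = λ²u on the unit circle, where Δ_Γ = ∂²/∂θ² and ∂_ν = ∂/∂r. -/

import Mathlib

open Complex

noncomputable section

/-- Bessel function of the first kind of integer order `n`. -/
def besselJ (n : ℕ) (z : ℂ) : ℂ :=
  ∑' m : ℕ, ((-1 : ℂ)) ^ m / ((Nat.factorial m : ℂ) * (Nat.factorial (m + n) : ℂ))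
      * (z / 2) ^ (2 * m + n)

/-- The mode `u(r,θ) = J_n(λr)e^{inθ}` on the closed unit disk, in polar coordinates. -/
def diskMode (n : ℕ) (lam : ℂ) (r θ : ℝ) : ℂ :=
  besselJ n (lam * r) * Complex.exp (I * (n : ℂ) * θ)

namespace Stmt7Aux

def Good (c : ℕ → ℂ) : Prop := ∀ R : ℝ, 0 < R → Summable fun k => ‖c k‖ * R ^ k

def psum (c : ℕ → ℂ) (z : ℂ) : ℂ := ∑' k, c k * z ^ k

def dcoef (c : ℕ → ℂ) (k : ℕ) : ℂ := ((k : ℂ) + 1) * c (k + 1)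

lemma kle (k : ℕ) : (k : ℝ) + 1 ≤ 2 ^ (k + 1) := by
  have := Nat.lt_two_pow_self (n := k + 1)
  exact_mod_cast this.le

lemma Good.dcoef_good {c : ℕ → ℂ} (hc : Good c) : Good (Stmt7Aux.dcoef c) := by
  intro R hR
  have h2R : (0:ℝ) < 2 * R := by linarith
  have hs : Summable fun k => (2 / R) * (‖c (k + 1)‖ * (2 * R) ^ (k + 1)) :=
    (((summable_nat_add_iff 1).2 (hc (2 * R) h2R))).mul_left _
  apply Summable.of_nonneg_of_le (fun k => by positivity) _ hs
  intro k
  have h1 : ‖Stmt7Aux.dcoef c k‖ = ((k:ℝ) + 1) * ‖c (k + 1)‖ := by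
    rw [Stmt7Aux.dcoef, norm_mul]
    congr 1
    rw [show ((k:ℂ) + 1) = ((k + 1 : ℕ) : ℂ) by push_cast; ring, Complex.norm_natCast]
    push_cast; ring
  rw [h1]
  have h2 : ((k:ℝ) + 1) * R ^ k ≤ (2:ℝ)^(k+1) * R ^ k :=
    mul_le_mul_of_nonneg_right (kle k) (by positivity)
  calc ((k:ℝ) + 1) * ‖c (k+1)‖ * R ^ k = ‖c (k+1)‖ * (((k:ℝ) + 1) * R ^ k) := by ring
    _ ≤ ‖c (k+1)‖ * ((2:ℝ)^(k+1) * R ^ k) := mul_le_mul_of_nonneg_left h2 (norm_nonneg _)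
    _ ≤ ‖c (k+1)‖ * ((2:ℝ)^(k+2) * R ^ k) := by
        apply mul_le_mul_of_nonneg_left _ (norm_nonneg _)
        exact mul_le_mul_of_nonneg_right (pow_le_pow_right₀ one_le_two (by omega)) (by positivity)
    _ = (2 / R) * (‖c (k + 1)‖ * (2 * R) ^ (k + 1)) := by
        field_simp
        ring

lemma Good.summable {c : ℕ → ℂ} (hc : Good c) (z : ℂ) :
    Summable fun k => c k * z ^ k := by
  have hR : (0:ℝ) < ‖z‖ + 1 := by positivity
  apply Summable.of_norm_bounded (hc (‖z‖ + 1) hR)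
  intro k
  rw [norm_mul, norm_pow]
  exact mul_le_mul_of_nonneg_left (pow_le_pow_left₀ (norm_nonneg z) (by linarith) k)
    (norm_nonneg _)

lemma Good.summable_u {c : ℕ → ℂ} (hc : Good c) {R : ℝ} (hR : 0 < R) :
    Summable fun k => ‖c k‖ * ((k : ℝ) + 1) * R ^ k := by
  refine Summable.of_nonneg_of_le (fun k => by positivity) (fun k => ?_)
    ((hc (2*R) (by linarith)).mul_left 2)
  have h1 : ((k:ℝ) + 1) * R ^ k ≤ 2 * (2 * R) ^ k := by
    have := mul_le_mul_of_nonneg_right (kle k) (pow_nonneg hR.le k)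
    calc ((k:ℝ) + 1) * R ^ k ≤ 2 ^ (k+1) * R ^ k := this
      _ = 2 * (2 * R) ^ k := by rw [mul_pow]; ring
  calc ‖c k‖ * ((k:ℝ) + 1) * R ^ k = ‖c k‖ * (((k:ℝ) + 1) * R ^ k) := by ring
    _ ≤ ‖c k‖ * (2 * (2 * R) ^ k) := mul_le_mul_of_nonneg_left h1 (norm_nonneg _)
    _ = 2 * (‖c k‖ * (2 * R) ^ k) := by ring

lemma Good.hasDerivAt {c : ℕ → ℂ} (hc : Good c) (z : ℂ) :
    HasDerivAt (psum c) (psum (Stmt7Aux.dcoef c) z) z := by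
  set R : ℝ := ‖z‖ + 1 with hRdef
  have hR : (0:ℝ) < R := by positivity
  have hR1 : (1:ℝ) ≤ R := by rw [hRdef]; linarith [norm_nonneg z]
  have hu : Summable fun k => ‖c k‖ * ((k : ℝ) + 1) * R ^ k := hc.summable_u hR
  have key : HasDerivAt (fun y => ∑' k, c k * y ^ k)
      (∑' k, c k * ((k : ℂ) * z ^ (k - 1))) z := by
    apply hasDerivAt_tsum_of_isPreconnected hu (Metric.isOpen_ball)
      (convex_ball (0:ℂ) R).isPreconnected
      (g := fun k y => c k * y ^ k) (g' := fun k y => c k * ((k : ℂ) * y ^ (k - 1)))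
      (y₀ := 0)
    · intro k y _
      exact (hasDerivAt_pow k y).const_mul (c k)
    · intro k y hy
      rw [mem_ball_zero_iff] at hy
      rw [norm_mul, norm_mul, norm_pow, Complex.norm_natCast]
      calc ‖c k‖ * ((k:ℝ) * ‖y‖ ^ (k-1)) ≤ ‖c k‖ * (((k:ℝ)+1) * R ^ k) := by
            apply mul_le_mul_of_nonneg_left _ (norm_nonneg _)
            apply mul_le_mul (by linarith) _ (by positivity) (by positivity)
            calc ‖y‖ ^ (k-1) ≤ R ^ (k-1) := pow_le_pow_left₀ (norm_nonneg _) hy.le _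
              _ ≤ R ^ k := pow_le_pow_right₀ hR1 (by omega)
        _ = ‖c k‖ * ((k:ℝ)+1) * R ^ k := by ring
    · simp [mem_ball_zero_iff, hR]
    · exact hc.summable 0
    · simp [mem_ball_zero_iff, hRdef]
  have hsum' : Summable fun k => c k * ((k : ℂ) * z ^ (k - 1)) := by
    apply Summable.of_norm_bounded hu
    intro k
    rw [norm_mul, norm_mul, norm_pow, Complex.norm_natCast]
    calc ‖c k‖ * ((k:ℝ) * ‖z‖ ^ (k-1)) ≤ ‖c k‖ * (((k:ℝ)+1) * R ^ k) := by
          apply mul_le_mul_of_nonneg_left _ (norm_nonneg _)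
          apply mul_le_mul (by linarith) _ (by positivity) (by positivity)
          calc ‖z‖ ^ (k-1) ≤ R ^ (k-1) :=
                pow_le_pow_left₀ (norm_nonneg _) (by simp [hRdef]) _
            _ ≤ R ^ k := pow_le_pow_right₀ hR1 (by omega)
      _ = ‖c k‖ * ((k:ℝ)+1) * R ^ k := by ring
  have heq : (∑' k, c k * ((k : ℂ) * z ^ (k - 1))) = psum (Stmt7Aux.dcoef c) z := by
    rw [Summable.tsum_eq_zero_add hsum']
    simp only [Nat.cast_zero, zero_mul, mul_zero, zero_add]
    rw [psum]
    apply tsum_congr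
    intro k
    rw [Stmt7Aux.dcoef]
    push_cast
    ring
  rw [← heq]
  exact key

lemma psum_zero (c : ℕ → ℂ) : psum c 0 = c 0 := by
  rw [psum, tsum_eq_single 0]
  · simp
  · intro k hk
    simp [zero_pow hk]

lemma Good.summable1 {c : ℕ → ℂ} (hc : Good c) (z : ℂ) :
    Summable fun k : ℕ => (k : ℂ) * c k * z ^ k := by
  have hR : (0:ℝ) < ‖z‖ + 1 := by positivity
  refine Summable.of_norm_bounded (hc.summable_u hR) (fun k => ?_)
  rw [norm_mul, norm_mul, norm_pow, Complex.norm_natCast]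
  calc (k:ℝ) * ‖c k‖ * ‖z‖ ^ k ≤ ((k:ℝ)+1) * ‖c k‖ * (‖z‖+1) ^ k := by
        apply mul_le_mul _ _ (by positivity) (by positivity)
        · exact mul_le_mul_of_nonneg_right (by linarith) (norm_nonneg _)
        · exact pow_le_pow_left₀ (norm_nonneg _) (by linarith) _
    _ = ‖c k‖ * ((k:ℝ)+1) * (‖z‖+1) ^ k := by ring

/-! ### Bessel coefficients -/

def ac (n m : ℕ) : ℂ := (-1) ^ m / ((Nat.factorial m : ℂ) * (Nat.factorial (m + n) : ℂ))

def bc (n k : ℕ) : ℂ :=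
  if n ≤ k ∧ (k - n) % 2 = 0 then ac n ((k - n) / 2) / 2 ^ k else 0

lemma bc_apply (n m : ℕ) : bc n (2 * m + n) = ac n m / 2 ^ (2 * m + n) := by
  rw [bc, if_pos ⟨by omega, by omega⟩]
  congr 2
  omega

lemma ac_ne_zero (n m : ℕ) : ac n m ≠ 0 := by
  rw [ac]
  apply div_ne_zero
  · exact pow_ne_zero _ (by norm_num)
  · apply mul_ne_zero <;> exact_mod_cast Nat.cast_ne_zero.2 (Nat.factorial_ne_zero _)

lemma norm_ac_le (n m : ℕ) : ‖ac n m‖ ≤ 1 / (Nat.factorial m : ℝ) := by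
  have h1 : ‖ac n m‖ = 1 / ((Nat.factorial m : ℝ) * (Nat.factorial (m + n) : ℝ)) := by
    rw [ac, norm_div, norm_pow, norm_neg, norm_one, one_pow, norm_mul,
      Complex.norm_natCast, Complex.norm_natCast]
  rw [h1]
  rw [div_le_div_iff₀ (by positivity) (by positivity)]
  have : (1:ℝ) ≤ (Nat.factorial (m + n) : ℝ) := by
    exact_mod_cast Nat.one_le_iff_ne_zero.2 (Nat.factorial_ne_zero _)
  nlinarith [(Nat.cast_pos (α := ℝ)).2 (Nat.factorial_pos m)]

lemma inj2 (n : ℕ) : Function.Injective (fun m => 2 * m + n) := by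
  intro a b h
  simp only at h
  omega

lemma bc_supp (n k : ℕ) (hk : k ∉ Set.range (fun m => 2 * m + n)) : bc n k = 0 := by
  rw [bc, if_neg]
  rintro ⟨h1, h2⟩
  exact hk ⟨(k - n) / 2, by simp; omega⟩

lemma Good_bc (n : ℕ) : Good (bc n) := by
  intro R hR
  rw [← Function.Injective.summable_iff (inj2 n)
    (fun k hk => by rw [bc_supp n k hk, norm_zero, zero_mul])]
  have hs : Summable fun m => R ^ n * ((R ^ 2) ^ m / (Nat.factorial m : ℝ)) :=
    (Real.summable_pow_div_factorial (R ^ 2)).mul_left _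
  refine Summable.of_nonneg_of_le
    (fun m => by show (0:ℝ) ≤ ‖bc n (2*m+n)‖ * R ^ (2*m+n); positivity) (fun m => ?_) hs
  show ‖bc n (2 * m + n)‖ * R ^ (2 * m + n) ≤ _
  rw [bc_apply, norm_div, norm_pow]
  have h2 : (1:ℝ) ≤ ‖(2:ℂ)‖ ^ (2 * m + n) := one_le_pow₀ (by norm_num)
  have hb : ‖ac n m‖ / ‖(2:ℂ)‖ ^ (2 * m + n) ≤ 1 / (Nat.factorial m : ℝ) :=
    le_trans (div_le_self (norm_nonneg _) h2) (norm_ac_le n m)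
  calc ‖ac n m‖ / ‖(2:ℂ)‖ ^ (2 * m + n) * R ^ (2 * m + n)
      ≤ (1 / (Nat.factorial m : ℝ)) * R ^ (2 * m + n) :=
        mul_le_mul_of_nonneg_right hb (by positivity)
    _ = R ^ n * ((R ^ 2) ^ m / (Nat.factorial m : ℝ)) := by rw [pow_add, pow_mul]; ring

lemma besselJ_eq (n : ℕ) : besselJ n = psum (bc n) := by
  funext z
  rw [besselJ, psum]
  rw [← Function.Injective.tsum_eq (inj2 n)
    (f := fun k => bc n k * z ^ k)
    (by
      intro k hk
      rcases Function.mem_support.1 hk with h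
      by_contra hr
      exact h (by rw [bc_supp n k hr, zero_mul]))]
  apply tsum_congr
  intro m
  show _ = bc n (2 * m + n) * z ^ (2 * m + n)
  rw [bc_apply, ac, div_pow]
  ring

def ecoef (n k : ℕ) : ℂ := if 2 ≤ k then bc n (k - 2) else 0

lemma coeff_rec (n k : ℕ) :
    ((k : ℂ) ^ 2 - (n : ℂ) ^ 2) * bc n k + ecoef n k = 0 := by
  by_cases h : n ≤ k ∧ (k - n) % 2 = 0
  · obtain ⟨m, hk⟩ : ∃ m, k = 2 * m + n := ⟨(k - n) / 2, by omega⟩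
    rcases m with _ | m'
    · -- k = n
      have hkn : k = n := by omega
      subst hkn
      have h1 : ((k : ℂ) ^ 2 - (k : ℂ) ^ 2) * bc k k = 0 := by ring
      rw [h1, zero_add, ecoef]
      split_ifs with h2
      · rw [bc, if_neg]
        rintro ⟨ha, _⟩
        omega
      · rfl
    · -- m ≥ 1
      have hk2 : 2 ≤ k := by omega
      have heq : ecoef n k = ac n m' / 2 ^ (k - 2) := by
        rw [ecoef, if_pos hk2, show k - 2 = 2 * m' + n by omega, bc_apply]
      have hbc : bc n k = ac n (m' + 1) / 2 ^ k := by rw [hk, bc_apply]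
      rw [heq, hbc]
      have hpow : (2 : ℂ) ^ k = 2 ^ (k - 2) * 4 := by
        rw [show k = (k - 2) + 2 by omega, pow_add]
        norm_num
      have hkc : (k : ℂ) = 2 * (m' : ℂ) + 2 + n := by
        rw [hk]; push_cast; ring
      rw [hkc, hpow, ac, ac]
      have hf1 : ((Nat.factorial (m' + 1) : ℂ)) = ((m' : ℂ) + 1) * (Nat.factorial m' : ℂ) := by
        rw [Nat.factorial_succ]; push_cast; ring
      have hf2 : ((Nat.factorial (m' + 1 + n) : ℂ))
          = ((m' : ℂ) + 1 + n) * (Nat.factorial (m' + n) : ℂ) := by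
        rw [show m' + 1 + n = (m' + n) + 1 by omega, Nat.factorial_succ]; push_cast; ring
      rw [hf1, hf2, pow_succ]
      have e1 : (Nat.factorial m' : ℂ) ≠ 0 := Nat.cast_ne_zero.2 (Nat.factorial_ne_zero _)
      have e2 : (Nat.factorial (m' + n) : ℂ) ≠ 0 := Nat.cast_ne_zero.2 (Nat.factorial_ne_zero _)
      have e3 : ((m' : ℂ) + 1) ≠ 0 := by
        intro hcon
        have : (m' : ℂ) = -1 := by linear_combination hcon
        have := congrArg Complex.re this
        simp at this
        nlinarith [Nat.cast_nonneg (α := ℝ) m']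
      have e4 : ((m' : ℂ) + 1 + n) ≠ 0 := by
        intro hcon
        have := congrArg Complex.re hcon
        simp at this
        nlinarith [Nat.cast_nonneg (α := ℝ) m', Nat.cast_nonneg (α := ℝ) n]
      have e5 : (2 : ℂ) ^ (k - 2) ≠ 0 := pow_ne_zero _ (by norm_num)
      field_simp
      ring
  · rw [bc, if_neg h, mul_zero, zero_add, ecoef]
    split_ifs with h2
    · rw [bc, if_neg]
      rintro ⟨ha, hb⟩
      exact h ⟨by omega, by omega⟩
    · rfl

lemma ode (n : ℕ) (z : ℂ) :
    z ^ 2 * psum (dcoef (dcoef (bc n))) z + z * psum (dcoef (bc n)) z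
      + (z ^ 2 - (n : ℂ) ^ 2) * psum (bc n) z = 0 := by
  set c := bc n with hcdef
  have hc : Good c := Good_bc n
  have hdc : Good (dcoef c) := hc.dcoef_good
  have hs1 : Summable fun k : ℕ => (k : ℂ) * c k * z ^ k := hc.summable1 z
  have hs2 : Summable fun k : ℕ => (k : ℂ) * ((k : ℂ) - 1) * c k * z ^ k := by
    apply (summable_nat_add_iff 1).1
    have hfun : (fun k : ℕ => ((k + 1 : ℕ) : ℂ) * (((k + 1 : ℕ) : ℂ) - 1) * c (k + 1) * z ^ (k + 1))
        = fun k : ℕ => z * ((k : ℂ) * dcoef c k * z ^ k) := by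
      funext k
      rw [dcoef]
      push_cast
      ring
    rw [hfun]
    exact (hdc.summable1 z).mul_left z
  have hsC : Summable fun k : ℕ => ecoef n k * z ^ k := by
    apply (summable_nat_add_iff 2).1
    have hfun : (fun k : ℕ => ecoef n (k + 2) * z ^ (k + 2))
        = fun k : ℕ => z ^ 2 * (c k * z ^ k) := by
      funext k
      rw [ecoef, if_pos (by omega : 2 ≤ k + 2), show k + 2 - 2 = k from rfl]
      ring
    rw [hfun]
    exact (hc.summable z).mul_left _
  have hS0 : Summable fun k : ℕ => (n : ℂ) ^ 2 * (c k * z ^ k) := (hc.summable z).mul_left _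
  have hA : (∑' k : ℕ, (k : ℂ) * c k * z ^ k) = z * psum (dcoef c) z := by
    rw [Summable.tsum_eq_zero_add hs1]
    simp only [Nat.cast_zero, zero_mul, zero_add]
    rw [psum, ← tsum_mul_left]
    apply tsum_congr
    intro k
    rw [dcoef]
    push_cast
    ring
  have hB : (∑' k : ℕ, (k : ℂ) * ((k : ℂ) - 1) * c k * z ^ k)
      = z ^ 2 * psum (dcoef (dcoef c)) z := by
    rw [Summable.tsum_eq_zero_add hs2, Summable.tsum_eq_zero_add ((summable_nat_add_iff 1).2 hs2)]
    norm_num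
    rw [psum, ← tsum_mul_left]
    apply tsum_congr
    intro k
    rw [dcoef, dcoef]
    push_cast
    ring
  have hC : (∑' k : ℕ, ecoef n k * z ^ k) = z ^ 2 * psum c z := by
    rw [Summable.tsum_eq_zero_add hsC, Summable.tsum_eq_zero_add ((summable_nat_add_iff 1).2 hsC)]
    have h0 : ecoef n 0 = 0 := by rw [ecoef, if_neg (by omega)]
    have h1 : ecoef n 1 = 0 := by rw [ecoef, if_neg (by omega)]
    rw [h0, h1]
    simp only [zero_mul, zero_add]
    rw [psum, ← tsum_mul_left]
    apply tsum_congr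
    intro k
    rw [ecoef, if_pos (by omega : 2 ≤ k + 1 + 1), show k + 1 + 1 - 2 = k from rfl]
    ring
  have key : (∑' k : ℕ, (((k : ℂ) ^ 2 - (n : ℂ) ^ 2) * c k + ecoef n k) * z ^ k) = 0 := by
    have : ∀ k : ℕ, (((k : ℂ) ^ 2 - (n : ℂ) ^ 2) * c k + ecoef n k) * z ^ k = 0 := by
      intro k
      rw [hcdef, coeff_rec n k, zero_mul]
    rw [tsum_congr this, tsum_zero]
  rw [← hB, ← hA]
  have hD : (z ^ 2 - (n : ℂ) ^ 2) * psum c z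
      = ∑' k : ℕ, (ecoef n k * z ^ k - (n : ℂ) ^ 2 * (c k * z ^ k)) := by
    rw [Summable.tsum_sub hsC hS0, hC, tsum_mul_left, ← psum]
    ring
  rw [hD, ← Summable.tsum_add hs2 hs1, ← Summable.tsum_add (hs2.add hs1) (hsC.sub hS0), ← key]
  apply tsum_congr
  intro k
  ring

lemma Good.hasDerivAt_real {c : ℕ → ℂ} (hc : Good c) (lam : ℂ) (x : ℝ) :
    HasDerivAt (fun s : ℝ => psum c (lam * s)) (lam * psum (dcoef c) (lam * x)) x := by
  have h0 : HasDerivAt (fun z : ℂ => lam * z) lam (x : ℂ) := by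
    simpa using (hasDerivAt_id (x : ℂ)).const_mul lam
  have h1 : HasDerivAt (fun z : ℂ => psum c (lam * z))
      (psum (dcoef c) (lam * x) * lam) (x : ℂ) :=
    (hc.hasDerivAt (lam * x)).comp _ h0
  have h2 := h1.comp_ofReal
  simpa [mul_comm] using h2

lemma exp_hasDerivAt (n : ℕ) (θ : ℝ) :
    HasDerivAt (fun t : ℝ => Complex.exp (I * n * t))
      (I * n * Complex.exp (I * n * θ)) θ := by
  have h0 : HasDerivAt (fun z : ℂ => I * n * z) (I * n) (θ : ℂ) := by
    simpa using (hasDerivAt_id (θ : ℂ)).const_mul (I * (n : ℂ))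
  have h1 : HasDerivAt (fun z : ℂ => Complex.exp (I * n * z))
      (Complex.exp (I * n * θ) * (I * n)) (θ : ℂ) :=
    (Complex.hasDerivAt_exp (I * n * θ)).comp _ h0
  have h2 := h1.comp_ofReal
  simpa [mul_comm] using h2

lemma Good.iterate_good {c : ℕ → ℂ} (hc : Good c) (j : ℕ) : Good (dcoef^[j] c) := by
  induction j generalizing c with
  | zero => simpa using hc
  | succ j ih =>
      rw [Function.iterate_succ_apply]
      exact ih hc.dcoef_good

lemma dcoef_iterate_zero (j : ℕ) : ∀ c : ℕ → ℂ, (dcoef^[j] c) 0 = (Nat.factorial j : ℂ) * c j := by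
  induction j with
  | zero => intro c; simp
  | succ j ih =>
      intro c
      rw [Function.iterate_succ_apply, ih, dcoef, Nat.factorial_succ]
      push_cast
      ring

lemma psum_iterate_zero {c : ℕ → ℂ} (hc : Good c) (hz : ∀ z, psum c z = 0) (j : ℕ) :
    ∀ z, psum (dcoef^[j] c) z = 0 := by
  induction j with
  | zero => simpa using hz
  | succ j ih =>
      intro z
      have hgj : Good (dcoef^[j] c) := hc.iterate_good j
      have h1 : HasDerivAt (psum (dcoef^[j] c)) (psum (dcoef (dcoef^[j] c)) z) z :=
        hgj.hasDerivAt z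
      have h2 : psum (dcoef^[j] c) = fun _ => (0 : ℂ) := funext ih
      have h3 : HasDerivAt (fun _ : ℂ => (0 : ℂ)) (psum (dcoef (dcoef^[j] c)) z) z := h2 ▸ h1
      have h4 : psum (dcoef (dcoef^[j] c)) z = 0 := by
        have := h3.deriv
        simpa using this.symm
      rw [Function.iterate_succ_apply']
      exact h4

lemma bessel_nontrivial (n : ℕ) (lam : ℂ) (hlam : lam ≠ 0)
    (h : ∀ r : ℝ, r ∈ Set.Icc (0:ℝ) 1 → besselJ n (lam * r) = 0) : False := by
  have hc : Good (bc n) := Good_bc n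
  have hdiff : Differentiable ℂ (psum (bc n)) := fun z => (hc.hasDerivAt z).differentiableAt
  have han : AnalyticOnNhd ℂ (psum (bc n)) Set.univ := fun z _ => hdiff.analyticAt z
  have hfreq : ∃ᶠ z in nhdsWithin (0 : ℂ) {(0:ℂ)}ᶜ, psum (bc n) z = 0 := by
    have htend : Filter.Tendsto (fun j : ℕ => lam * (((1 : ℝ) / (j + 1) : ℝ) : ℂ))
        Filter.atTop (nhdsWithin (0 : ℂ) {(0:ℂ)}ᶜ) := by
      rw [tendsto_nhdsWithin_iff]
      constructor
      · have h1 : Filter.Tendsto (fun j : ℕ => ((1 : ℝ) / (j + 1) : ℝ))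
            Filter.atTop (nhds 0) := tendsto_one_div_add_atTop_nhds_zero_nat
        have h2 : Filter.Tendsto (fun j : ℕ => (((1 : ℝ) / (j + 1) : ℝ) : ℂ))
            Filter.atTop (nhds (0 : ℂ)) := by
          have := (Complex.continuous_ofReal.tendsto (0 : ℝ)).comp h1
          simpa [Function.comp_def] using this
        simpa using h2.const_mul lam
      · filter_upwards with j
        simp only [Set.mem_compl_iff, Set.mem_singleton_iff]
        intro hcon
        rcases mul_eq_zero.1 hcon with h' | h'
        · exact hlam h'
        · rw [Complex.ofReal_eq_zero] at h'
          have : (0:ℝ) < 1 / ((j:ℝ) + 1) := by positivity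
          linarith [this, h'.le, this.ne' h']
    apply htend.frequently
    apply Filter.Frequently.of_forall
    intro j
    have hj1 : (0:ℝ) < (j:ℝ) + 1 := by positivity
    have hmem : ((1 : ℝ) / (j + 1) : ℝ) ∈ Set.Icc (0:ℝ) 1 := by
      constructor
      · positivity
      · rw [div_le_one hj1]; linarith
    have := h _ hmem
    rwa [besselJ_eq] at this
  have heq0 : Set.EqOn (psum (bc n)) 0 Set.univ :=
    han.eqOn_zero_of_preconnected_of_frequently_eq_zero isPreconnected_univ
      (Set.mem_univ 0) hfreq
  have hz : ∀ z, psum (bc n) z = 0 := fun z => heq0 (Set.mem_univ z)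
  have hz2 := psum_iterate_zero hc hz n 0
  rw [psum_zero, dcoef_iterate_zero] at hz2
  have hbcn : bc n n ≠ 0 := by
    rw [bc, if_pos ⟨le_refl n, by omega⟩]
    simp only [Nat.sub_self]
    exact div_ne_zero (ac_ne_zero n 0) (pow_ne_zero _ (by norm_num))
  rcases mul_eq_zero.1 hz2 with h' | h'
  · exact (Nat.cast_ne_zero.2 (Nat.factorial_ne_zero n) : (Nat.factorial n : ℂ) ≠ 0) h'
  · exact hbcn h'

end Stmt7Aux

open Stmt7Aux in
/-- If `λ ≠ 0` satisfies `(n² + iλ − λ²)J_n(λ) + λJ_n′(λ) = 0`, then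
`u(r,θ) = J_n(λr)e^{inθ}` is nonzero, satisfies `−Δu = λ²u` in the open unit disk
(with `Δ = ∂²_r + r⁻¹∂_r + r⁻²∂²_θ` in polar coordinates), and
`(−Δ_Γ + iλ)u + ∂_ν u = λ²u` on the unit circle, where `Δ_Γ = ∂²_θ` and `∂_ν = ∂_r`. -/
theorem stmt7 (n : ℕ) (lam : ℂ) (hlam : lam ≠ 0)
    (hroot : ((n : ℂ) ^ 2 + I * lam - lam ^ 2) * besselJ n lam
        + lam * deriv (besselJ n) lam = 0) :
    (∃ r ∈ Set.Icc (0 : ℝ) 1, ∃ θ : ℝ, diskMode n lam r θ ≠ 0)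
    ∧ (∀ r ∈ Set.Ioo (0 : ℝ) 1, ∀ θ : ℝ,
        -(deriv (deriv fun s : ℝ => diskMode n lam s θ) r
            + (r : ℂ)⁻¹ * deriv (fun s : ℝ => diskMode n lam s θ) r
            + ((r : ℂ) ^ 2)⁻¹ * deriv (deriv fun t : ℝ => diskMode n lam r t) θ)
          = lam ^ 2 * diskMode n lam r θ)
    ∧ (∀ θ : ℝ,
        -(deriv (deriv fun t : ℝ => diskMode n lam 1 t) θ)
            + I * lam * diskMode n lam 1 θ
            + deriv (fun s : ℝ => diskMode n lam s θ) 1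
          = lam ^ 2 * diskMode n lam 1 θ) := by
  have hc : Good (bc n) := Good_bc n
  have hdc : Good (dcoef (bc n)) := hc.dcoef_good
  have hdm : ∀ θ : ℝ, (fun s : ℝ => diskMode n lam s θ)
      = fun s : ℝ => psum (bc n) (lam * s) * Complex.exp (I * n * θ) := by
    intro θ
    funext s
    rw [diskMode, besselJ_eq]
  have hd1 : ∀ θ : ℝ, deriv (fun s : ℝ => diskMode n lam s θ)
      = fun s : ℝ => lam * psum (dcoef (bc n)) (lam * s) * Complex.exp (I * n * θ) := by
    intro θ
    funext s
    rw [hdm θ]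
    exact ((hc.hasDerivAt_real lam s).mul_const _).deriv
  have hd2 : ∀ (θ : ℝ) (r : ℝ),
      deriv (fun s : ℝ => lam * psum (dcoef (bc n)) (lam * s) * Complex.exp (I * n * θ)) r
      = lam * (lam * psum (dcoef (dcoef (bc n))) (lam * r)) * Complex.exp (I * n * θ) := by
    intro θ r
    exact (((hdc.hasDerivAt_real lam r).const_mul lam).mul_const _).deriv
  have hθ1 : ∀ r : ℝ, deriv (fun t : ℝ => diskMode n lam r t)
      = fun t : ℝ => psum (bc n) (lam * r) * (I * n * Complex.exp (I * n * t)) := by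
    intro r
    funext t
    have hfun : (fun t : ℝ => diskMode n lam r t)
        = fun t : ℝ => psum (bc n) (lam * r) * Complex.exp (I * n * t) :=
      funext fun t => by rw [diskMode, besselJ_eq]
    rw [hfun]
    exact ((exp_hasDerivAt n t).const_mul _).deriv
  have hθ2 : ∀ (r : ℝ) (θ : ℝ),
      deriv (fun t : ℝ => psum (bc n) (lam * r) * (I * n * Complex.exp (I * n * t))) θ
      = psum (bc n) (lam * r) * (I * n * (I * n * Complex.exp (I * n * θ))) := by
    intro r θ
    exact (((exp_hasDerivAt n θ).const_mul (I * (n:ℂ))).const_mul _).deriv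
  refine ⟨?_, ?_, ?_⟩
  · by_contra hcontra
    push_neg at hcontra
    apply bessel_nontrivial n lam hlam
    intro r hr
    have := hcontra r hr 0
    rw [diskMode] at this
    rcases mul_eq_zero.1 this with h' | h'
    · exact h'
    · exact absurd h' (Complex.exp_ne_zero _)
  · intro r hr θ
    have hr0 : (r : ℂ) ≠ 0 := by
      exact_mod_cast ne_of_gt hr.1
    rw [hd1 θ, hd2 θ r, hθ1 r, hθ2 r θ, diskMode, besselJ_eq]
    have hODE := ode n (lam * r)
    field_simp
    linear_combination (-1 : ℂ) * hODE
      - (psum (bc n) (lam * r) * (n:ℂ)^2) * Complex.I_sq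
  · intro θ
    rw [besselJ_eq] at hroot
    rw [(hc.hasDerivAt lam).deriv] at hroot
    rw [hd1 θ, hθ1 1, hθ2 1 θ, diskMode, besselJ_eq]
    simp only [Complex.ofReal_one, mul_one]
    linear_combination (Complex.exp (I * n * θ)) * hroot
      - (psum (bc n) lam * (n:ℂ)^2 * Complex.exp (I * n * θ)) * Complex.I_sq


end
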